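/- Let (X,d) be a Robinson space and p ∈ X. Then there exists a compatible order < of (X,d) such that: every copoint C at p with diam(C) ≤ δ_C (where δ_C = d(p,x) for x ∈ C) is an interval of < located entirely to the left or entirely to the right of p; and every copoint C at p with diam(C) > δ_C defines two sets C^l = {u ∈ C : u < p} and C^r = {u ∈ C : p < u}, both of which are intervals of < with C^l < p < C^r. -/

import Mathlib

def IsMmodule {X : Type*} (d : X → X → ℝ) (M : Set X) : Prop :=
  ∀ z ∉ M, ∀ x ∈ M, ∀ y ∈ M, d z x = d z y

def IsCopoint {X : Type*} (d : X → X → ℝ) (p : X) (C : Set X) : Prop :=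
  IsMmodule d C ∧ p ∉ C ∧
    ∀ M : Set X, IsMmodule d M → p ∉ M → C ⊆ M → M = C

def IsCompatible {X : Type*} (d : X → X → ℝ) (lt : X → X → Prop) : Prop :=
  ∀ x y z : X, lt x y → lt y z → max (d x y) (d y z) ≤ d x z

def IsInterval {X : Type*} (lt : X → X → Prop) (I : Set X) : Prop :=
  ∀ x ∈ I, ∀ z ∈ I, ∀ y : X, lt x y → lt y z → y ∈ I

section AuxRobinson

variable {X : Type*}

private lemma tri' {lt : X → X → Prop} (h : IsStrictTotalOrder X lt) (a b : X) :
    lt a b ∨ a = b ∨ lt b a := by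
  by_contra hc; push_neg at hc; exact hc.2.1 (h.trichotomous a b hc.1 hc.2.2)

private lemma trans' {lt : X → X → Prop} (h : IsStrictTotalOrder X lt) {a b c : X}
    (h1 : lt a b) (h2 : lt b c) : lt a c := h.trans a b c h1 h2

private lemma asymm' {lt : X → X → Prop} (h : IsStrictTotalOrder X lt) {a b : X}
    (hab : lt a b) : ¬ lt b a := fun hba => h.irrefl a (h.trans a b a hab hba)

private lemma exists_lt_max [Finite X] {lt : X → X → Prop} (hSTO : IsStrictTotalOrder X lt)
    {S : Set X} (hS : S.Nonempty) : ∃ a ∈ S, ∀ b ∈ S, b ≠ a → lt b a := by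
  haveI : IsTrans X (Function.swap lt) := ⟨fun a b c h1 h2 => hSTO.trans _ _ _ h2 h1⟩
  haveI : IsIrrefl X (Function.swap lt) := ⟨fun a => hSTO.irrefl a⟩
  have hwf := Finite.wellFounded_of_trans_of_irrefl (Function.swap lt)
  obtain ⟨a, ha, hmin⟩ := hwf.has_min S hS
  refine ⟨a, ha, fun b hb hne => ?_⟩
  rcases tri' hSTO b a with h | h | h
  · exact h
  · exact absurd h hne
  · exact absurd h (hmin b hb)

private lemma comp1 {d : X → X → ℝ} {lt : X → X → Prop} (hc : IsCompatible d lt) {x y z : X}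
    (h1 : lt x y) (h2 : lt y z) : d x y ≤ d x z :=
  le_trans (le_max_left _ _) (hc x y z h1 h2)

private lemma comp2 {d : X → X → ℝ} {lt : X → X → Prop} (hc : IsCompatible d lt) {x y z : X}
    (h1 : lt x y) (h2 : lt y z) : d y z ≤ d x z :=
  le_trans (le_max_right _ _) (hc x y z h1 h2)

private lemma copoint_unique {d : X → X → ℝ} {p : X} {C D : Set X}
    (hC : IsCopoint d p C) (hD : IsCopoint d p D) {w : X} (hwC : w ∈ C) (hwD : w ∈ D) :
    C = D := by
  have hM : IsMmodule d (C ∪ D) := by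
    intro z hz x hx y hy
    have hzC : z ∉ C := fun h => hz (Or.inl h)
    have hzD : z ∉ D := fun h => hz (Or.inr h)
    have key : ∀ u ∈ C ∪ D, d z u = d z w := by
      intro u hu
      rcases hu with hu | hu
      · exact hC.1 z hzC u hu w hwC
      · exact hD.1 z hzD u hu w hwD
    rw [key x hx, key y hy]
  have hp : p ∉ C ∪ D := by rintro (h | h); exacts [hC.2.1 h, hD.2.1 h]
  have h1 := hC.2.2 _ hM hp Set.subset_union_left
  have h2 := hD.2.2 _ hM hp Set.subset_union_right
  exact h1.symm.trans h2

/-- Segment lemma: if `x, z ∈ C` (a copoint at `p`), `x < y < z` and `p` is not strictly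
between `x` and `z`, then `y ∈ C`. -/
private lemma copoint_segment {d : X → X → ℝ} (hsymm : ∀ x y : X, d x y = d y x)
    {lt : X → X → Prop} (hSTO : IsStrictTotalOrder X lt) (hcomp : IsCompatible d lt)
    {p : X} {C : Set X} (hcop : IsCopoint d p C) :
    ∀ x ∈ C, ∀ z ∈ C, ∀ y : X, lt x y → lt y z → ¬(lt x p ∧ lt p z) → y ∈ C := by
  intro x hx z hz y hxy hyz hnp
  have hpM : p ∉ C ∪ {v | lt x v ∧ lt v z} := by
    rintro (h | h)
    · exact hcop.2.1 h
    · exact hnp ⟨h.1, h.2⟩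
  have hMm : IsMmodule d (C ∪ {v | lt x v ∧ lt v z}) := by
    intro w hw u hu u' hu'
    have hwC : w ∉ C := fun h => hw (Or.inl h)
    have hwseg : ¬ (lt x w ∧ lt w z) := fun h => hw (Or.inr h)
    have key : ∀ u ∈ C ∪ {v | lt x v ∧ lt v z}, d w u = d w x := by
      intro u hu
      rcases hu with hu | hu
      · exact hcop.1 w hwC u hu x hx
      · have hwz : d w z = d w x := hcop.1 w hwC z hz x hx
        have hwx : w ≠ x := fun h => hwC (h ▸ hx)
        have hwzne : w ≠ z := fun h => hwC (h ▸ hz)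
        rcases tri' hSTO w x with h1 | h1 | h1
        · have hwu : lt w u := trans' hSTO h1 hu.1
          have l1 : d w x ≤ d w u := comp1 hcomp h1 hu.1
          have l2 : d w u ≤ d w z := comp1 hcomp hwu hu.2
          exact le_antisymm (hwz ▸ l2) l1
        · exact absurd h1 hwx
        · have hzw : lt z w := by
            rcases tri' hSTO w z with h2 | h2 | h2
            · exact absurd ⟨h1, h2⟩ hwseg
            · exact absurd h2 hwzne
            · exact h2
          have huw : lt u w := trans' hSTO hu.2 hzw
          have l1 : d z w ≤ d u w := comp2 hcomp hu.2 hzw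
          have l2 : d u w ≤ d x w := comp2 hcomp hu.1 huw
          have hl1' : d x w ≤ d u w := by
            rw [hsymm z w, hwz, ← hsymm x w] at l1; exact l1
          have heq : d u w = d x w := le_antisymm l2 hl1'
          rw [hsymm w u, heq, hsymm x w]
    rw [key u hu, key u' hu']
  have hMC := hcop.2.2 _ hMm hpM Set.subset_union_left
  have : y ∈ C ∪ {v | lt x v ∧ lt v z} := Or.inr ⟨hxy, hyz⟩
  rwa [hMC] at this

/-- The surgery: move the right part `R = {c ∈ C | p < c}` of a straddling small copoint
to just after `A = max {c ∈ C | c < p}`, obtaining a new compatible total order. -/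
private lemma surgery {d : X → X → ℝ} (hsymm : ∀ x y : X, d x y = d y x)
    {lt : X → X → Prop} (hSTO : IsStrictTotalOrder X lt) (hcomp : IsCompatible d lt)
    {p : X} {C : Set X} (hCm : IsMmodule d C) (hpC : p ∉ C)
    {δ : ℝ} (hδ : ∀ c ∈ C, d p c = δ) (hdiam : ∀ x ∈ C, ∀ y ∈ C, d x y ≤ δ)
    {A B : X} (hA : A ∈ C) (hAp : lt A p)
    (hAmax : ∀ c ∈ C, lt c p → c ≠ A → lt c A)
    (hB : B ∈ C) (hpB : lt p B)
    (hBmax : ∀ c ∈ C, lt p c → c ≠ B → lt c B) :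
    ∃ lt' : X → X → Prop, IsStrictTotalOrder X lt' ∧ IsCompatible d lt' ∧
      (∀ w, (w ∈ C ∧ lt p w) → lt' w p) ∧
      (∀ w, ¬(w ∈ C ∧ lt p w) → ((lt' w p ↔ lt w p) ∧ (lt' p w ↔ lt p w))) := by
  set R : Set X := {c | c ∈ C ∧ lt p c} with hRdef
  set lt' : X → X → Prop := fun x y =>
    (x ∉ R ∧ y ∉ R ∧ lt x y) ∨ (x ∈ R ∧ y ∈ R ∧ lt x y) ∨
    (x ∈ R ∧ y ∉ R ∧ lt A y) ∨ (x ∉ R ∧ y ∈ R ∧ ¬ lt A x) with hlt'def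
  have hpR : p ∉ R := fun h => hpC h.1
  have hAR : A ∉ R := fun h => asymm' hSTO hAp h.2
  have hBR : B ∈ R := ⟨hB, hpB⟩
  have hApd : d A p = δ := by rw [hsymm]; exact hδ A hA
  have hBpd : d p B = δ := hδ B hB
  have sideL : ∀ c ∈ C, c ∉ R → lt c p := by
    intro c hc hcR
    rcases tri' hSTO c p with h | h | h
    · exact h
    · exact absurd (h ▸ hc) hpC
    · exact absurd ⟨hc, h⟩ hcR
  have leA : ∀ w : X, ¬ lt A w → lt w p := by
    intro w hw
    rcases tri' hSTO A w with h | h | h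
    · exact absurd h hw
    · exact h ▸ hAp
    · exact trans' hSTO h hAp
  have ltxA : ∀ w : X, w ∉ C → ¬ lt A w → lt w A := by
    intro w hwC hw
    rcases tri' hSTO A w with h | h | h
    · exact absurd h hw
    · exact absurd (h ▸ hA) hwC
    · exact h
  have mm : ∀ w, w ∉ C → ∀ c ∈ C, d w c = d w A := fun w hw c hc => hCm w hw c hc A hA
  have K2 : ∀ u ∈ C, lt u p → ∀ v ∈ R, d u v = δ := by
    intro u hu hup v hv
    refine le_antisymm (hdiam u hu v hv.1) ?_
    have := comp2 hcomp hup hv.2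
    rwa [hδ v hv.1] at this
  have zBcases : ∀ z, z ∉ R → lt z B ∨ lt B z := by
    intro z hz
    rcases tri' hSTO z B with h | h | h
    · exact Or.inl h
    · exact absurd (h ▸ hBR) hz
    · exact Or.inr h
  have notC_right : ∀ w, lt B w → w ∉ R → w ∉ C :=
    fun w h hwR hwC => hwR ⟨hwC, trans' hSTO hpB h⟩
  have K3 : ∀ w, lt A w → w ≠ p → w ∉ R → lt w B →
      (∀ c ∈ C, d w c = δ) ∧ d w p ≤ δ := by
    intro w hAw hwp hwR hwB
    have hwC : w ∉ C := by
      intro hwc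
      rcases tri' hSTO w p with h | h | h
      · rcases eq_or_ne w A with rfl | hne
        · exact hSTO.irrefl _ hAw
        · exact asymm' hSTO hAw (hAmax w hwc h hne)
      · exact hwp h
      · exact hwR ⟨hwc, h⟩
    have hall : ∀ c ∈ C, d w c = d w A := mm w hwC
    rcases tri' hSTO w p with h | h | h
    · have t1 := hcomp A w p hAw h
      rw [hApd] at t1
      have t2 := hcomp w p B h hpB
      have up : d w A ≤ δ := by
        have := le_trans (le_max_left _ _) t1; rwa [hsymm A w] at this
      have lo : δ ≤ d w A := by
        have h1 := le_trans (le_max_right _ _) t2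
        rw [hBpd] at h1
        rwa [← hall B hB]
      have heq : d w A = δ := le_antisymm up lo
      exact ⟨fun c hc => (hall c hc).trans heq, le_trans (le_max_right _ _) t1⟩
    · exact absurd h hwp
    · have t1 := hcomp p w B h hwB
      rw [hBpd] at t1
      have t2 := hcomp A p w hAp h
      have up : d w A ≤ δ := by
        have h1 := le_trans (le_max_right _ _) t1
        rwa [← hall B hB]
      have lo : δ ≤ d w A := by
        have h1 := le_trans (le_max_left _ _) t2
        rw [hApd] at h1
        rwa [hsymm A w] at h1
      have heq : d w A = δ := le_antisymm up lo
      have hwpδ : d w p ≤ δ := by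
        have := le_trans (le_max_left _ _) t1; rwa [hsymm p w] at this
      exact ⟨fun c hc => (hall c hc).trans heq, hwpδ⟩
  have K6 : ∀ w, w ∉ C → lt p w → δ ≤ d A w ∧ d p w ≤ d A w := by
    intro w hwC hpw
    have t := hcomp A p w hAp hpw
    rw [hApd] at t
    exact ⟨le_trans (le_max_left _ _) t, le_trans (le_max_right _ _) t⟩
  have Rltz : ∀ z, lt B z → ∀ v ∈ R, lt v z := by
    intro z hBz v hv
    rcases eq_or_ne v B with rfl | hne
    · exact hBz
    · exact trans' hSTO (hBmax v hv.1 hv.2 hne) hBz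
  -- strict total order
  have hSTO' : IsStrictTotalOrder X lt' := by
    refine { trichotomous := ?_, irrefl := ?_, trans := ?_ }
    · intro a b
      suffices hh : lt' a b ∨ a = b ∨ lt' b a from fun h1 h2 => (hh.resolve_left h1).resolve_right h2
      by_cases ha : a ∈ R <;> by_cases hb : b ∈ R
      · rcases tri' hSTO a b with h | h | h
        · exact Or.inl (Or.inr (Or.inl ⟨ha, hb, h⟩))
        · exact Or.inr (Or.inl h)
        · exact Or.inr (Or.inr (Or.inr (Or.inl ⟨hb, ha, h⟩)))
      · by_cases hAb : lt A b
        · exact Or.inl (Or.inr (Or.inr (Or.inl ⟨ha, hb, hAb⟩)))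
        · exact Or.inr (Or.inr (Or.inr (Or.inr (Or.inr ⟨hb, ha, hAb⟩))))
      · by_cases hAa : lt A a
        · exact Or.inr (Or.inr (Or.inr (Or.inr (Or.inl ⟨hb, ha, hAa⟩))))
        · exact Or.inl (Or.inr (Or.inr (Or.inr ⟨ha, hb, hAa⟩)))
      · rcases tri' hSTO a b with h | h | h
        · exact Or.inl (Or.inl ⟨ha, hb, h⟩)
        · exact Or.inr (Or.inl h)
        · exact Or.inr (Or.inr (Or.inl ⟨hb, ha, h⟩))
    · intro a h
      rcases h with ⟨_, _, h⟩ | ⟨_, _, h⟩ | ⟨h1, h2, _⟩ | ⟨h1, h2, _⟩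
      · exact hSTO.irrefl a h
      · exact hSTO.irrefl a h
      · exact h2 h1
      · exact h1 h2
    · intro x y z hxy hyz
      rcases hxy with ⟨hx, hy, h1⟩ | ⟨hx, hy, h1⟩ | ⟨hx, hy, h1⟩ | ⟨hx, hy, h1⟩ <;>
        rcases hyz with ⟨hy', hz, h2⟩ | ⟨hy', hz, h2⟩ | ⟨hy', hz, h2⟩ | ⟨hy', hz, h2⟩
      · exact Or.inl ⟨hx, hz, trans' hSTO h1 h2⟩
      · exact absurd hy' hy
      · exact absurd hy' hy
      · exact Or.inr (Or.inr (Or.inr ⟨hx, hz, fun h => h2 (trans' hSTO h h1)⟩))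
      · exact absurd hy hy'
      · exact Or.inr (Or.inl ⟨hx, hz, trans' hSTO h1 h2⟩)
      · exact Or.inr (Or.inr (Or.inl ⟨hx, hz, h2⟩))
      · exact absurd hy hy'
      · exact Or.inr (Or.inr (Or.inl ⟨hx, hz, trans' hSTO h1 h2⟩))
      · exact absurd hy' hy
      · exact absurd hy' hy
      · exact absurd h1 h2
      · exact absurd hy hy'
      · exact Or.inr (Or.inr (Or.inr ⟨hx, hz, h1⟩))
      · -- x ∉ R, y ∈ R, z ∉ R : x ≤ A < z
        refine Or.inl ⟨hx, hz, ?_⟩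
        rcases tri' hSTO A x with h | h | h
        · exact absurd h h1
        · exact h ▸ h2
        · exact trans' hSTO h h2
      · exact absurd hy hy'
  -- compatibility
  have hcomp' : IsCompatible d lt' := by
    intro x y z hxy hyz
    rcases hxy with ⟨hx, hy, h1⟩ | ⟨hx, hy, h1⟩ | ⟨hx, hy, h1⟩ | ⟨hx, hy, h1⟩ <;>
      rcases hyz with ⟨hy', hz, h2⟩ | ⟨hy', hz, h2⟩ | ⟨hy', hz, h2⟩ | ⟨hy', hz, h2⟩
    -- (1,1)
    · exact hcomp x y z h1 h2
    · exact absurd hy' hy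
    · exact absurd hy' hy
    -- (1,4) : x,y ∉ R, z ∈ R, x < y, ¬ A < y
    · have hyp : lt y p := leA y h2
      exact hcomp x y z h1 (trans' hSTO hyp hz.2)
    · exact absurd hy hy'
    -- (2,2)
    · exact hcomp x y z h1 h2
    -- (2,3) : x,y ∈ R, z ∉ R, x < y, A < z  [P7]
    · by_cases hzp : z = p
      · rw [hzp]
        have dxz : d x p = δ := by rw [hsymm]; exact hδ x hx.1
        have dyz : d y p = δ := by rw [hsymm]; exact hδ y hy.1
        rw [dxz, dyz]
        exact max_le (hdiam x hx.1 y hy.1) le_rfl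
      · rcases zBcases z hz with hzB | hBz
        · obtain ⟨h3, _⟩ := K3 z h2 hzp hz hzB
          have dxz : d x z = δ := by rw [hsymm]; exact h3 x hx.1
          have dyz : d y z = δ := by rw [hsymm]; exact h3 y hy.1
          rw [dxz, dyz]
          exact max_le (hdiam x hx.1 y hy.1) le_rfl
        · exact hcomp x y z h1 (Rltz z hBz y hy)
    · exact absurd hy hy'
    -- (3,1) : x ∈ R, y,z ∉ R, A < y, y < z  [P5]
    · by_cases hyp : y = p
      · rw [hyp]
        have hpz : lt p z := hyp ▸ h2
        have dxy : d x p = δ := by rw [hsymm]; exact hδ x hx.1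
        have hzp : z ≠ p := fun h => hSTO.irrefl p (h ▸ hpz)
        rcases zBcases z hz with hzB | hBz
        · obtain ⟨h3, h3p⟩ := K3 z (trans' hSTO hAp hpz) hzp hz hzB
          have dxz : d x z = δ := by rw [hsymm]; exact h3 x hx.1
          have dpz : d p z ≤ δ := by rw [hsymm]; exact h3p
          rw [dxy, dxz]
          exact max_le le_rfl dpz
        · have hzC : z ∉ C := notC_right z hBz hz
          obtain ⟨h61, h62⟩ := K6 z hzC (trans' hSTO hpB hBz)
          have dxz : d x z = d A z := by
            rw [hsymm x z, hsymm A z]; exact mm z hzC x hx.1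
          rw [dxy, dxz]
          exact max_le h61 h62
      · rcases zBcases y hy with hyB | hBy
        · obtain ⟨h3y, h3yp⟩ := K3 y h1 hyp hy hyB
          have dxy : d x y = δ := by rw [hsymm]; exact h3y x hx.1
          by_cases hzp : z = p
          · rw [hzp]
            have dxz : d x p = δ := by rw [hsymm]; exact hδ x hx.1
            rw [dxy, dxz]
            exact max_le le_rfl (hzp ▸ h3yp)
          · rcases zBcases z hz with hzB | hBz
            · obtain ⟨h3z, _⟩ := K3 z (trans' hSTO h1 h2) hzp hz hzB
              have dxz : d x z = δ := by rw [hsymm]; exact h3z x hx.1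
              have dyz : d y z ≤ δ := by
                have := comp1 hcomp h2 hzB
                rwa [h3y B hB] at this
              rw [dxy, dxz]
              exact max_le le_rfl dyz
            · have hzC : z ∉ C := notC_right z hBz hz
              obtain ⟨h61, h62⟩ := K6 z hzC (trans' hSTO hpB hBz)
              have dxz : d x z = d A z := by
                rw [hsymm x z, hsymm A z]; exact mm z hzC x hx.1
              have dyz : d y z ≤ d A z := comp2 hcomp h1 h2
              rw [dxy, dxz]
              exact max_le h61 dyz
        · have hyC : y ∉ C := notC_right y hBy hy
          exact hcomp x y z (Rltz y hBy x hx) h2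
    · exact absurd hy' hy
    · exact absurd hy' hy
    -- (3,4)
    · exact absurd h1 h2
    · exact absurd hy hy'
    -- (4,2) : x ∉ R, y,z ∈ R, ¬ A < x, y < z [P6]
    · have hxp : lt x p := leA x h1
      exact hcomp x y z (trans' hSTO hxp hy.2) h2
    -- (4,3) : x ∉ R, y ∈ R, z ∉ R, ¬ A < x, A < z [P3]
    · by_cases hxC : x ∈ C
      · have hxp : lt x p := sideL x hxC hx
        have dxy : d x y = δ := K2 x hxC hxp y hy
        by_cases hzp : z = p
        · rw [hzp]
          have dxz : d x p = δ := by rw [hsymm]; exact hδ x hxC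
          have dyz : d y p = δ := by rw [hsymm]; exact hδ y hy.1
          rw [dxy, dxz, dyz]
          exact max_le le_rfl le_rfl
        · rcases zBcases z hz with hzB | hBz
          · obtain ⟨h3, _⟩ := K3 z h2 hzp hz hzB
            have dxz : d x z = δ := by rw [hsymm]; exact h3 x hxC
            have dyz : d y z = δ := by rw [hsymm]; exact h3 y hy.1
            rw [dxy, dxz, dyz]
            exact max_le le_rfl le_rfl
          · have hzC : z ∉ C := notC_right z hBz hz
            obtain ⟨h61, _⟩ := K6 z hzC (trans' hSTO hpB hBz)
            have dxz : d x z = d A z := by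
              rw [hsymm x z, hsymm A z]; exact mm z hzC x hxC
            have dyz : d y z = d A z := by
              rw [hsymm y z, hsymm A z]; exact mm z hzC y hy.1
            rw [dxy, dxz, dyz]
            exact max_le h61 le_rfl
      · have hxA : lt x A := ltxA x hxC h1
        have dxy : d x y = d x A := hCm x hxC y hy.1 A hA
        have e1 : d x A ≤ d x z := comp1 hcomp hxA h2
        have e2 : d A z ≤ d x z := comp2 hcomp hxA h2
        have dyz : d y z = d A z := by
          by_cases hzp : z = p
          · rw [hzp]
            have d1 : d y p = δ := by rw [hsymm]; exact hδ y hy.1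
            rw [d1, hApd]
          · rcases zBcases z hz with hzB | hBz
            · obtain ⟨h3, _⟩ := K3 z h2 hzp hz hzB
              have d1 : d y z = δ := by rw [hsymm]; exact h3 y hy.1
              have d2 : d A z = δ := by rw [hsymm]; exact h3 A hA
              rw [d1, d2]
            · have hzC : z ∉ C := notC_right z hBz hz
              rw [hsymm y z, hsymm A z]; exact mm z hzC y hy.1
        rw [dxy, dyz]
        exact max_le e1 e2
    · exact absurd hy hy'
  refine ⟨lt', hSTO', hcomp', ?_, ?_⟩
  · intro w hw
    exact Or.inr (Or.inr (Or.inl ⟨hw, hpR, hAp⟩))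
  · intro w hwR
    constructor
    · constructor
      · rintro (⟨_, _, h⟩ | ⟨hw', _, _⟩ | ⟨hw', _, _⟩ | ⟨_, hp', _⟩)
        · exact h
        · exact absurd hw' hwR
        · exact absurd hw' hwR
        · exact absurd hp' hpR
      · intro h
        exact Or.inl ⟨hwR, hpR, h⟩
    · constructor
      · rintro (⟨_, _, h⟩ | ⟨hp', _, _⟩ | ⟨hp', _, _⟩ | ⟨_, hw', _⟩)
        · exact h
        · exact absurd hp' hpR
        · exact absurd hp' hpR
        · exact absurd hw' hwR
      · intro h
        exact Or.inl ⟨hpR, hwR, h⟩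

end AuxRobinson

/-- in a Robinson space `(X,d)` with a point `p`, there is a compatible
order `<` such that every copoint `C` at `p` with `diam(C) ≤ δ_C` is an interval of
`<` located entirely on one side of `p`, and every copoint `C` with `diam(C) > δ_C`
splits into the two intervals `C^l = {u ∈ C : u < p}` and `C^r = {u ∈ C : p < u}`
(with `C^l < p < C^r`). -/
theorem exists_compatible_order_copoints {X : Type*} [Fintype X] (d : X → X → ℝ)
    (hsymm : ∀ x y : X, d x y = d y x)
    (hnonneg : ∀ x y : X, 0 ≤ d x y)
    (hself : ∀ x : X, d x x = 0)
    (hRobinson : ∃ lt : X → X → Prop, IsStrictTotalOrder X lt ∧ IsCompatible d lt)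
    (p : X) :
    ∃ lt : X → X → Prop, IsStrictTotalOrder X lt ∧ IsCompatible d lt ∧
      ∀ C : Set X, IsCopoint d p C → ∀ δ : ℝ, (∀ x ∈ C, d p x = δ) →
        ((∀ x ∈ C, ∀ y ∈ C, d x y ≤ δ) →
          IsInterval lt C ∧ ((∀ u ∈ C, lt u p) ∨ (∀ u ∈ C, lt p u))) ∧
        ((∃ x ∈ C, ∃ y ∈ C, δ < d x y) →
          IsInterval lt {u ∈ C | lt u p} ∧ IsInterval lt {u ∈ C | lt p u}) := by
  classical
  obtain ⟨lt0, h0, hc0⟩ := hRobinson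
  set Str : (X → X → Prop) → X → Prop := fun lt u =>
    ∃ C : Set X, IsCopoint d p C ∧ (∀ x ∈ C, ∀ y ∈ C, d x y ≤ d p x) ∧
      u ∈ C ∧ lt p u ∧ ∃ v ∈ C, lt v p with hStrdef
  have key : ∀ n : ℕ, ∀ lt : X → X → Prop, IsStrictTotalOrder X lt → IsCompatible d lt →
      {u | Str lt u}.ncard ≤ n →
      ∃ lt', IsStrictTotalOrder X lt' ∧ IsCompatible d lt' ∧ {u | Str lt' u} = ∅ := by
    intro n
    induction n with
    | zero =>
      intro lt h1 h2 h3
      refine ⟨lt, h1, h2, ?_⟩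
      have : {u | Str lt u}.ncard = 0 := le_antisymm h3 (Nat.zero_le _)
      exact (Set.ncard_eq_zero (Set.toFinite _)).mp this
    | succ n ih =>
      intro lt h1 h2 h3
      by_cases hemp : {u | Str lt u} = ∅
      · exact ⟨lt, h1, h2, hemp⟩
      · obtain ⟨u₀, hu₀⟩ := Set.nonempty_iff_ne_empty.mpr hemp
        obtain ⟨C, hcop, hsmall, hu₀C, hpu₀, v₀, hv₀C, hv₀p⟩ := hu₀
        have hδc : ∀ c ∈ C, d p c = d p u₀ := fun c hc => hcop.1 p hcop.2.1 c hc u₀ hu₀C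
        have hdiam : ∀ x ∈ C, ∀ y ∈ C, d x y ≤ d p u₀ :=
          fun x hx y hy => (hsmall x hx y hy).trans_eq (hδc x hx)
        obtain ⟨A, hAmem, hAmax'⟩ :=
          exists_lt_max h1 (S := {c | c ∈ C ∧ lt c p}) ⟨v₀, hv₀C, hv₀p⟩
        obtain ⟨B, hBmem, hBmax'⟩ :=
          exists_lt_max h1 (S := {c | c ∈ C ∧ lt p c}) ⟨u₀, hu₀C, hpu₀⟩
        obtain ⟨lt', hSTO', hcomp', hs1, hs2⟩ :=
          surgery hsymm h1 h2 hcop.1 hcop.2.1 hδc hdiam hAmem.1 hAmem.2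
            (fun c hc hcp hne => hAmax' c ⟨hc, hcp⟩ hne) hBmem.1 hBmem.2
            (fun c hc hcp hne => hBmax' c ⟨hc, hcp⟩ hne)
        have hsubset : {u | Str lt' u} ⊆ {u | Str lt u} := by
          intro u' hu'
          obtain ⟨D, hD, hDsm, hu'D, hpu', v', hv'D, hv'p⟩ := hu'
          have hu'R : ¬(u' ∈ C ∧ lt p u') := fun hR => asymm' hSTO' (hs1 u' hR) hpu'
          have hpu'0 : lt p u' := ((hs2 u' hu'R).2).mp hpu'
          have hv'R : ¬(v' ∈ C ∧ lt p v') := by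
            intro hR
            have hDC : D = C := copoint_unique hD hcop hv'D hR.1
            exact hu'R ⟨hDC ▸ hu'D, hpu'0⟩
          have hv'p0 : lt v' p := ((hs2 v' hv'R).1).mp hv'p
          exact ⟨D, hD, hDsm, hu'D, hpu'0, v', hv'D, hv'p0⟩
        have hu₀new : u₀ ∉ {u | Str lt' u} := by
          intro hcon
          obtain ⟨D, hD, hDsm, hu₀D, hpu₀', _, _, _⟩ := hcon
          exact asymm' hSTO' (hs1 u₀ ⟨hu₀C, hpu₀⟩) hpu₀'
        have hss : {u | Str lt' u} ⊂ {u | Str lt u} :=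
          ⟨hsubset, fun hsup => hu₀new (hsup ⟨C, hcop, hsmall, hu₀C, hpu₀, v₀, hv₀C, hv₀p⟩)⟩
        have hlt := Set.ncard_lt_ncard hss (Set.toFinite _)
        exact ih lt' hSTO' hcomp' (by omega)
  obtain ⟨lt, hSTO, hcomp, hnostr⟩ := key ({u | Str lt0 u}.ncard) lt0 h0 hc0 le_rfl
  refine ⟨lt, hSTO, hcomp, ?_⟩
  intro C hcop δ hδc
  constructor
  · intro hsm
    have hside : (∀ u ∈ C, lt u p) ∨ (∀ u ∈ C, lt p u) := by
      by_cases hl : ∀ u ∈ C, lt u p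
      · exact Or.inl hl
      · push_neg at hl
        obtain ⟨u, huC, hup⟩ := hl
        have hpu : lt p u := by
          rcases tri' hSTO u p with h | h | h
          · exact absurd h hup
          · exact absurd (h ▸ huC) hcop.2.1
          · exact h
        right
        intro v hvC
        rcases tri' hSTO v p with h | h | h
        · exfalso
          have hstr : Str lt u :=
            ⟨C, hcop, fun x hx y hy => (hsm x hx y hy).trans_eq (hδc x hx).symm,
              huC, hpu, v, hvC, h⟩
          have : u ∈ {u | Str lt u} := hstr
          rw [hnostr] at this
          exact this
        · exact absurd (h ▸ hvC) hcop.2.1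
        · exact h
    refine ⟨?_, hside⟩
    intro x hx z hz y hxy hyz
    apply copoint_segment hsymm hSTO hcomp hcop x hx z hz y hxy hyz
    rcases hside with hs | hs
    · exact fun hh => asymm' hSTO (hs z hz) hh.2
    · exact fun hh => asymm' hSTO (hs x hx) hh.1
  · intro _
    constructor
    · intro x hx z hz y hxy hyz
      have hyC : y ∈ C :=
        copoint_segment hsymm hSTO hcomp hcop x hx.1 z hz.1 y hxy hyz
          (fun hh => asymm' hSTO hz.2 hh.2)
      exact ⟨hyC, trans' hSTO hyz hz.2⟩
    · intro x hx z hz y hxy hyz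
      have hyC : y ∈ C :=
        copoint_segment hsymm hSTO hcomp hcop x hx.1 z hz.1 y hxy hyz
          (fun hh => asymm' hSTO hx.2 hh.1)
      exact ⟨hyC, trans' hSTO hx.2 hxy⟩
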